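/- arXiv:2503.03096 — 3 statements merged into one kernel-verified Lean document; each statement's English description precedes it below -/
import Mathlib

section
/- Let X₁, X₂ be RN modules over K with base (Ω,F,P) and T : X₁ → X₂ a linear operator. Then T is almost surely bounded (i.e., there exists η ∈ L⁰₊(F) with ‖Tz‖₂ ≤ η·‖z‖₁ for all z ∈ X₁) if and only if T is a continuous module homomorphism from X₁ to X₂ with respect to the (ε,λ)-topologies. -/
open MeasureTheory Filter Set
noncomputable section

/-- A random normed module (RN module) over ℝ with base `(Ω, F, P)`:
an `L⁰(F,ℝ)`-module `X` together with an `L⁰`-norm. The `L⁰(F,ℝ)`-scalar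
multiplication is bundled as the field `smul`. -/
structure RNModuleStr {Ω : Type*} [MeasurableSpace Ω] (P : Measure Ω)
    (X : Type*) [AddCommGroup X] where
  smul : (Ω →ₘ[P] ℝ) → X → X
  nrm : X → Ω →ₘ[P] ℝ
  one_smul' : ∀ x, smul 1 x = x
  mul_smul' : ∀ ξ η x, smul (ξ * η) x = smul ξ (smul η x)
  smul_add' : ∀ ξ x y, smul ξ (x + y) = smul ξ x + smul ξ y
  add_smul' : ∀ ξ η x, smul (ξ + η) x = smul ξ x + smul η x
  nrm_nonneg : ∀ x, 0 ≤ nrm x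
  nrm_smul : ∀ ξ x, nrm (smul ξ x) = |ξ| * nrm x
  nrm_add_le : ∀ x y, nrm (x + y) ≤ nrm x + nrm y
  nrm_eq_zero : ∀ x, nrm x = 0 → x = 0

namespace RNModuleStr

variable {Ω : Type*} [MeasurableSpace Ω] {P : Measure Ω} {X : Type*} [AddCommGroup X]

/-- Scalar multiplication by a real constant (viewed as a constant random variable). -/
def rsmul (M : RNModuleStr P X) (c : ℝ) (x : X) : X :=
  M.smul (AEEqFun.const Ω c) x

/-- Convergence in the `(ε,λ)`-topology of an RN module, i.e. convergence in
probability of the `L⁰`-norms of the differences, along an arbitrary filter. -/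
def TendstoRN (M : RNModuleStr P X) {ι : Type*} (f : ι → X) (l : Filter ι) (x : X) : Prop :=
  ∀ ε : ℝ, 0 < ε → Tendsto (fun i => P {ω : Ω | ε ≤ M.nrm (f i - x) ω}) l (nhds 0)

/-- Sequential continuity of a map between RN modules; in the metrizable
`(ε,λ)`-topology this is equivalent to continuity. -/
def RNContinuousMap {Y : Type*} [AddCommGroup Y] (M : RNModuleStr P X)
    (N : RNModuleStr P Y) (T : X → Y) : Prop :=
  ∀ (u : ℕ → X) (x : X), M.TendstoRN u atTop x → N.TendstoRN (fun n => T (u n)) atTop (T x)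

/-- `T : X → Y` is a module homomorphism of `L⁰`-modules. -/
def IsModuleHom {Y : Type*} [AddCommGroup Y] (M : RNModuleStr P X)
    (N : RNModuleStr P Y) (T : X → Y) : Prop :=
  (∀ x y : X, T (x + y) = T x + T y) ∧ ∀ (ξ : Ω →ₘ[P] ℝ) (x : X), T (M.smul ξ x) = N.smul ξ (T x)

/-- `T` is almost surely bounded: `‖Tz‖ ≤ η ‖z‖` for some `η ∈ L⁰₊`. -/
def ASBounded {Y : Type*} [AddCommGroup Y] (M : RNModuleStr P X)
    (N : RNModuleStr P Y) (T : X → Y) : Prop :=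
  ∃ η : Ω →ₘ[P] ℝ, 0 ≤ η ∧ ∀ x : X, N.nrm (T x) ≤ η * M.nrm x

/-- Riemann sum over the uniform partition of `[a,b]` into `n` pieces. -/
def rsum (M : RNModuleStr P X) (f : ℝ → X) (a b : ℝ) (n : ℕ) : X :=
  ∑ i ∈ Finset.range n, M.rsmul ((b - a) / n) (f (a + (b - a) * i / n))

/-- `y` is the Riemann integral `∫ₐᵇ f(u) du` in the complete RN module `X`
(limit in the `(ε,λ)`-topology of the uniform Riemann sums). -/
def IsIntegral (M : RNModuleStr P X) (f : ℝ → X) (a b : ℝ) (y : X) : Prop :=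
  M.TendstoRN (fun n => M.rsum f a b n) atTop y

/-- The family `{V(s) : s ≥ 0}` is locally a.s. bounded:
`⋁_{s∈[0,l]} ‖V(s)‖ ∈ L⁰₊(F)` for every `l > 0`. -/
def LocASBounded (M : RNModuleStr P X) (V : ℝ → X → X) : Prop :=
  ∀ l : ℝ, 0 < l → ∃ η : Ω →ₘ[P] ℝ, 0 ≤ η ∧
    ∀ s ∈ Icc (0:ℝ) l, ∀ x : X, M.nrm (V s x) ≤ η * M.nrm x

/-- `{V(s) : s ≥ 0}` is a `C`-semigroup on the RN module `X`. -/
structure IsCSemigroup (M : RNModuleStr P X) (V : ℝ → X → X) (C : X → X) : Prop where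
  C_hom : M.IsModuleHom M C
  C_bdd : ASBounded M M C
  C_inj : Function.Injective C
  V_hom : ∀ s : ℝ, 0 ≤ s → M.IsModuleHom M (V s)
  V_bdd : ∀ s : ℝ, 0 ≤ s → ASBounded M M (V s)
  strong_cont : ∀ (z : X) (t : ℝ), 0 ≤ t →
    M.TendstoRN (fun s => V s z) (nhdsWithin t (Ici 0)) (V t z)
  V_zero : V 0 = C
  C_V : ∀ s t : ℝ, 0 ≤ s → 0 ≤ t → ∀ z : X, C (V (s + t) z) = V s (V t z)

/-- `(A, DA)` is the generator of the `C`-semigroup `{V(s) : s ≥ 0}`: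
`DA = {z : lim_{s↓0} (V(s)z - Cz)/s exists and lies in R(C)}` and
`Az = C⁻¹ lim_{s↓0} (V(s)z - Cz)/s`. -/
structure IsGenerator (M : RNModuleStr P X) (V : ℝ → X → X) (C : X → X)
    (DA : Set X) (A : X → X) : Prop where
  mem_iff : ∀ z : X, z ∈ DA ↔ ∃ w : X,
    M.TendstoRN (fun s => M.rsmul s⁻¹ (V s z - C z)) (nhdsWithin 0 (Ioi 0)) (C w)
  spec : ∀ z ∈ DA,
    M.TendstoRN (fun s => M.rsmul s⁻¹ (V s z - C z)) (nhdsWithin 0 (Ioi 0)) (C (A z))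

/-- `{V(s) : s ≥ 0}` is a mild `C`-existence family for the module homomorphism
`A` with domain `DA`. -/
structure IsMildCExistenceFamily (M : RNModuleStr P X) (V : ℝ → X → X) (C : X → X)
    (DA : Set X) (A : X → X) : Prop where
  V_hom : ∀ s : ℝ, 0 ≤ s → M.IsModuleHom M (V s)
  locBdd : M.LocASBounded V
  strong_cont : ∀ (z : X) (t : ℝ), 0 ≤ t →
    M.TendstoRN (fun s => V s z) (nhdsWithin t (Ici 0)) (V t z)
  integral_mem : ∀ (z : X) (s : ℝ), 0 ≤ s → ∃ y : X,
    M.IsIntegral (fun u => V u z) 0 s y ∧ y ∈ DA ∧ A y = V s z - C z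

/-- `A` (with domain `DA`) is a closed module homomorphism: its graph is closed
in the `(ε,λ)`-topology. -/
def IsClosedOperator (M : RNModuleStr P X) (DA : Set X) (A : X → X) : Prop :=
  ∀ (u : ℕ → X) (z y : X), (∀ n, u n ∈ DA) →
    M.TendstoRN u atTop z → M.TendstoRN (fun n => A (u n)) atTop y →
    z ∈ DA ∧ A z = y

end RNModuleStr

open RNModuleStr

section Stmt1Helpers

open MeasureTheory
open scoped ENNReal NNReal Topology
open scoped ENNReal NNReal Topology

variable {Ω : Type*} [MeasurableSpace Ω] {P : Measure Ω}

namespace RNModuleStr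

variable {X : Type*} [AddCommGroup X] (M : RNModuleStr P X)

theorem smul_zero_left (x : X) : M.smul 0 x = 0 := by
  have h := M.add_smul' 0 0 x
  rw [add_zero] at h
  exact (left_eq_add.mp h)

theorem nrm_zero : M.nrm (0 : X) = 0 := by
  have habs : |(0 : Ω →ₘ[P] ℝ)| = 0 := by
    apply AEEqFun.ext
    filter_upwards [AEEqFun.coeFn_abs (0 : Ω →ₘ[P] ℝ),
      AEEqFun.coeFn_zero (β := ℝ) (μ := P)] with ω e1 e2
    rw [e1, e2]; simp
  have hzm : (0 : Ω →ₘ[P] ℝ) * M.nrm 0 = 0 := by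
    apply AEEqFun.ext
    filter_upwards [AEEqFun.coeFn_mul (0 : Ω →ₘ[P] ℝ) (M.nrm 0),
      AEEqFun.coeFn_zero (β := ℝ) (μ := P)] with ω e1 e2
    rw [e1]; simp only [Pi.mul_apply]; rw [e2]; simp
  have h := M.nrm_smul 0 (0 : X)
  rw [M.smul_zero_left, habs, hzm] at h
  exact h

theorem nrm_coeFn_nonneg (x : X) : ∀ᵐ ω ∂P, 0 ≤ M.nrm x ω := by
  filter_upwards [AEEqFun.coeFn_le.mpr (M.nrm_nonneg x), AEEqFun.coeFn_zero (μ := P) (β := ℝ)]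
    with ω h1 h2
  rw [h2] at h1
  exact h1

/-- The key indicator-combination identity for RN modules. -/
theorem nrm_combo {p q : Ω →ₘ[P] ℝ} (hp : |p| = p) (hq : |q| = q)
    (hpp : p * p = p) (hqq : q * q = q) (hpq : p * q = 0) (hqp : q * p = 0)
    (hpq1 : p + q = 1) (a b : X) :
    M.nrm (M.smul p a + M.smul q b) = p * M.nrm a + q * M.nrm b := by
  set w := M.smul p a + M.smul q b with hw
  have h1 : p * M.nrm w = p * M.nrm a := by
    calc p * M.nrm w = |p| * M.nrm w := by rw [hp]
    _ = M.nrm (M.smul p w) := (M.nrm_smul p w).symm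
    _ = M.nrm (M.smul p (M.smul p a) + M.smul p (M.smul q b)) := by rw [hw, M.smul_add']
    _ = M.nrm (M.smul (p * p) a + M.smul (p * q) b) := by rw [M.mul_smul', M.mul_smul']
    _ = M.nrm (M.smul p a) := by rw [hpp, hpq, M.smul_zero_left, add_zero]
    _ = p * M.nrm a := by rw [M.nrm_smul, hp]
  have h2 : q * M.nrm w = q * M.nrm b := by
    calc q * M.nrm w = |q| * M.nrm w := by rw [hq]
    _ = M.nrm (M.smul q w) := (M.nrm_smul q w).symm
    _ = M.nrm (M.smul q (M.smul p a) + M.smul q (M.smul q b)) := by rw [hw, M.smul_add']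
    _ = M.nrm (M.smul (q * p) a + M.smul (q * q) b) := by rw [M.mul_smul', M.mul_smul']
    _ = M.nrm (M.smul q b) := by rw [hqq, hqp, M.smul_zero_left, zero_add]
    _ = q * M.nrm b := by rw [M.nrm_smul, hq]
  have hdistrib : (p + q) * M.nrm w = p * M.nrm w + q * M.nrm w := by
    apply AEEqFun.ext
    filter_upwards [AEEqFun.coeFn_mul (p + q) (M.nrm w), AEEqFun.coeFn_add p q,
      AEEqFun.coeFn_add (p * M.nrm w) (q * M.nrm w), AEEqFun.coeFn_mul p (M.nrm w),
      AEEqFun.coeFn_mul q (M.nrm w)] with ω e1 e2 e3 e4 e5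
    simp only [Pi.mul_apply, Pi.add_apply] at *
    rw [e1, e3, e4, e5, e2, add_mul]
  have hone : (1 : Ω →ₘ[P] ℝ) * M.nrm w = M.nrm w := by
    apply AEEqFun.ext
    filter_upwards [AEEqFun.coeFn_mul (1 : Ω →ₘ[P] ℝ) (M.nrm w),
      AEEqFun.coeFn_one (β := ℝ) (μ := P)] with ω e1 e2
    simp only [Pi.mul_apply, Pi.one_apply] at *
    rw [e1, e2, one_mul]
  calc M.nrm w = 1 * M.nrm w := hone.symm
  _ = (p + q) * M.nrm w := by rw [hpq1]
  _ = p * M.nrm w + q * M.nrm w := hdistrib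
  _ = p * M.nrm a + q * M.nrm b := by rw [h1, h2]

end RNModuleStr

end Stmt1Helpers

section Stmt1Helpers2

open MeasureTheory RNModuleStr
open scoped ENNReal NNReal Topology

variable {Ω : Type*} [MeasurableSpace Ω] {P : Measure Ω}
variable {X₁ X₂ : Type*} [AddCommGroup X₁] [AddCommGroup X₂]
variable (M₁ : RNModuleStr P X₁) (M₂ : RNModuleStr P X₂)

/-- Given two points, one can find a point whose norm is at most the sup of the
norms and whose image under `T` has norm exactly the sup of the image norms. -/
theorem exists_sup_point (T : X₁ → X₂) (hT : IsModuleHom M₁ M₂ T) (a b : X₁) :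
    ∃ w : X₁, M₁.nrm w ≤ M₁.nrm a ⊔ M₁.nrm b ∧
      M₂.nrm (T w) = M₂.nrm (T a) ⊔ M₂.nrm (T b) := by
  -- measurable representatives of the image norms
  obtain ⟨p, hpm, hpe⟩ := (M₂.nrm (T a)).aestronglyMeasurable.aemeasurable
  obtain ⟨q, hqm, hqe⟩ := (M₂.nrm (T b)).aestronglyMeasurable.aemeasurable
  set A : Set Ω := {ω | q ω ≤ p ω} with hA
  have hAm : MeasurableSet A := measurableSet_le hqm hpm
  set i : Ω → ℝ := A.indicator (fun _ => 1) with hi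
  set j : Ω → ℝ := Aᶜ.indicator (fun _ => 1) with hj
  have him : Measurable i := (measurable_const (a := (1:ℝ))).indicator hAm
  have hjm : Measurable j := (measurable_const (a := (1:ℝ))).indicator hAm.compl
  set pᵢ : Ω →ₘ[P] ℝ := AEEqFun.mk i him.aestronglyMeasurable with hpi
  set qᵢ : Ω →ₘ[P] ℝ := AEEqFun.mk j hjm.aestronglyMeasurable with hqi
  have hpc : ⇑pᵢ =ᵐ[P] i := AEEqFun.coeFn_mk _ _
  have hqc : ⇑qᵢ =ᵐ[P] j := AEEqFun.coeFn_mk _ _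
  have hiv : ∀ ω, (i ω = 1 ∧ j ω = 0 ∧ ω ∈ A) ∨ (i ω = 0 ∧ j ω = 1 ∧ ω ∉ A) := by
    intro ω
    by_cases hω : ω ∈ A
    · left; refine ⟨?_, ?_, hω⟩ <;> simp [hi, hj, Set.indicator_apply, hω]
    · right; refine ⟨?_, ?_, hω⟩ <;> simp [hi, hj, Set.indicator_apply, hω]
  have habs_p : |pᵢ| = pᵢ := by
    apply AEEqFun.ext
    filter_upwards [AEEqFun.coeFn_abs pᵢ, hpc] with ω e1 e2
    rw [e1, e2]
    rcases hiv ω with ⟨h1, _, _⟩ | ⟨h1, _, _⟩ <;> rw [h1] <;> norm_num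
  have habs_q : |qᵢ| = qᵢ := by
    apply AEEqFun.ext
    filter_upwards [AEEqFun.coeFn_abs qᵢ, hqc] with ω e1 e2
    rw [e1, e2]
    rcases hiv ω with ⟨_, h2, _⟩ | ⟨_, h2, _⟩ <;> rw [h2] <;> norm_num
  have hmul : ∀ (u v : Ω →ₘ[P] ℝ) (u' v' : Ω → ℝ), ⇑u =ᵐ[P] u' → ⇑v =ᵐ[P] v' →
      ∀ w : Ω →ₘ[P] ℝ, ⇑w =ᵐ[P] (fun ω => u' ω * v' ω) → u * v = w := by
    intro u v u' v' hu hv w hw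
    apply AEEqFun.ext
    filter_upwards [AEEqFun.coeFn_mul u v, hu, hv, hw] with ω e1 e2 e3 e4
    rw [e1, e4]; simp only [Pi.mul_apply]; rw [e2, e3]
  have hpp : pᵢ * pᵢ = pᵢ := by
    apply hmul pᵢ pᵢ i i hpc hpc pᵢ
    filter_upwards [hpc] with ω e
    rw [e]
    rcases hiv ω with ⟨h1, _, _⟩ | ⟨h1, _, _⟩ <;> rw [h1] <;> norm_num
  have hqq : qᵢ * qᵢ = qᵢ := by
    apply hmul qᵢ qᵢ j j hqc hqc qᵢ
    filter_upwards [hqc] with ω e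
    rw [e]
    rcases hiv ω with ⟨_, h2, _⟩ | ⟨_, h2, _⟩ <;> rw [h2] <;> norm_num
  have hpq : pᵢ * qᵢ = 0 := by
    apply hmul pᵢ qᵢ i j hpc hqc 0
    filter_upwards [AEEqFun.coeFn_zero (β := ℝ) (μ := P)] with ω e
    rw [e]
    rcases hiv ω with ⟨h1, h2, _⟩ | ⟨h1, h2, _⟩ <;> rw [h1, h2] <;> norm_num
  have hqp : qᵢ * pᵢ = 0 := by
    apply hmul qᵢ pᵢ j i hqc hpc 0
    filter_upwards [AEEqFun.coeFn_zero (β := ℝ) (μ := P)] with ω e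
    rw [e]
    rcases hiv ω with ⟨h1, h2, _⟩ | ⟨h1, h2, _⟩ <;> rw [h1, h2] <;> norm_num
  have hpq1 : pᵢ + qᵢ = 1 := by
    apply AEEqFun.ext
    filter_upwards [AEEqFun.coeFn_add pᵢ qᵢ, hpc, hqc,
      AEEqFun.coeFn_one (β := ℝ) (μ := P)] with ω e1 e2 e3 e4
    rw [e1, e4]; simp only [Pi.add_apply, Pi.one_apply]; rw [e2, e3]
    rcases hiv ω with ⟨h1, h2, _⟩ | ⟨h1, h2, _⟩ <;> rw [h1, h2] <;> norm_num
  refine ⟨M₁.smul pᵢ a + M₁.smul qᵢ b, ?_, ?_⟩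
  · rw [M₁.nrm_combo habs_p habs_q hpp hqq hpq hqp hpq1 a b]
    rw [← AEEqFun.coeFn_le]
    filter_upwards [AEEqFun.coeFn_add (pᵢ * M₁.nrm a) (qᵢ * M₁.nrm b),
      AEEqFun.coeFn_mul pᵢ (M₁.nrm a), AEEqFun.coeFn_mul qᵢ (M₁.nrm b), hpc, hqc,
      AEEqFun.coeFn_sup (M₁.nrm a) (M₁.nrm b)] with ω e1 e2 e3 e4 e5 e6
    rw [e1, e6]; simp only [Pi.add_apply, Pi.mul_apply]
    rw [e2, e3]; simp only [Pi.mul_apply]; rw [e4, e5]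
    rcases hiv ω with ⟨h1, h2, _⟩ | ⟨h1, h2, _⟩ <;> rw [h1, h2] <;>
      simp [le_max_left, le_max_right]
  · have hTw : T (M₁.smul pᵢ a + M₁.smul qᵢ b) = M₂.smul pᵢ (T a) + M₂.smul qᵢ (T b) := by
      rw [hT.1, hT.2, hT.2]
    rw [hTw, M₂.nrm_combo habs_p habs_q hpp hqq hpq hqp hpq1 (T a) (T b)]
    apply AEEqFun.ext
    filter_upwards [AEEqFun.coeFn_add (pᵢ * M₂.nrm (T a)) (qᵢ * M₂.nrm (T b)),
      AEEqFun.coeFn_mul pᵢ (M₂.nrm (T a)), AEEqFun.coeFn_mul qᵢ (M₂.nrm (T b)), hpc, hqc,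
      AEEqFun.coeFn_sup (M₂.nrm (T a)) (M₂.nrm (T b)), hpe, hqe] with ω e1 e2 e3 e4 e5 e6 e7 e8
    rw [e1, e6]; simp only [Pi.add_apply, Pi.mul_apply]
    rw [e2, e3]; simp only [Pi.mul_apply]; rw [e4, e5]
    rcases hiv ω with ⟨h1, h2, hω⟩ | ⟨h1, h2, hω⟩ <;> rw [h1, h2]
    · rw [hA] at hω
      have : M₂.nrm (T b) ω ≤ M₂.nrm (T a) ω := by rw [e7, e8]; exact hω
      simp [max_eq_left this]
    · rw [hA] at hω
      have : M₂.nrm (T a) ω ≤ M₂.nrm (T b) ω := by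
        rw [e7, e8]; exact le_of_not_ge hω
      simp [max_eq_right this]

end Stmt1Helpers2

section Stmt1Helpers3

open MeasureTheory Filter Set RNModuleStr
open scoped ENNReal NNReal Topology

variable {Ω : Type*} [MeasurableSpace Ω] {P : Measure Ω}
variable {X₁ X₂ : Type*} [AddCommGroup X₁] [AddCommGroup X₂]
variable (M₁ : RNModuleStr P X₁) (M₂ : RNModuleStr P X₂)

theorem asBounded_continuous [IsProbabilityMeasure P] (T : X₁ → X₂)
    (hT : IsModuleHom M₁ M₂ T) (hb : ASBounded M₁ M₂ T) : RNContinuousMap M₁ M₂ T := by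
  obtain ⟨η, hη0, hηb⟩ := hb
  intro u x hconv ε hε
  obtain ⟨e, hem, hee⟩ := η.aestronglyMeasurable.aemeasurable
  rw [ENNReal.tendsto_nhds_zero]
  intro δ hδ
  have hCm : Tendsto (fun m : ℕ => P {ω | (m : ℝ) < e ω}) atTop (nhds 0) := by
    have h0 : (⋂ m : ℕ, {ω | (m : ℝ) < e ω}) = ∅ := by
      ext ω
      simp only [Set.mem_iInter, Set.mem_setOf_eq, Set.mem_empty_iff_false, iff_false,
        not_forall, not_lt]
      obtain ⟨m, hm⟩ := exists_nat_ge (e ω)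
      exact ⟨m, hm⟩
    have h := tendsto_measure_iInter_atTop (μ := P)
      (s := fun m : ℕ => {ω | (m : ℝ) < e ω})
      (fun m => (measurableSet_lt measurable_const hem).nullMeasurableSet)
      (fun m n hmn => fun ω hω => by
        simp only [Set.mem_setOf_eq] at hω ⊢
        exact lt_of_le_of_lt (Nat.cast_le.mpr hmn) hω)
      ⟨0, measure_ne_top _ _⟩
    rw [h0, measure_empty] at h
    exact h
  have hδ2 : (0:ℝ≥0∞) < δ / 2 := ENNReal.div_pos hδ.ne' (by norm_num)
  obtain ⟨m, hmP, hm1⟩ :=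
    ((ENNReal.tendsto_nhds_zero.mp hCm (δ / 2) hδ2).and (eventually_ge_atTop 1)).exists
  have hmpos : (0:ℝ) < (m:ℝ) := by exact_mod_cast Nat.lt_of_lt_of_le Nat.zero_lt_one hm1
  have hεm : (0:ℝ) < ε / m := div_pos hε hmpos
  filter_upwards [ENNReal.tendsto_nhds_zero.mp (hconv (ε / m) hεm) (δ / 2) hδ2] with n hn
  set d := u n - x with hd
  have hTd : T (u n) - T x = T d := by
    have h1 : T d + T x = T (u n) := by rw [← hT.1, hd, sub_add_cancel]
    rw [← h1]; abel
  have hgood : ∀ᵐ ω ∂P, ε ≤ M₂.nrm (T (u n) - T x) ω →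
      ((m:ℝ) < e ω ∨ ε / m ≤ M₁.nrm d ω) := by
    filter_upwards [AEEqFun.coeFn_le.mpr (hηb d), AEEqFun.coeFn_mul η (M₁.nrm d), hee,
      M₁.nrm_coeFn_nonneg d] with ω hle hmul he hd0 hεle
    by_contra hcon
    push_neg at hcon
    obtain ⟨hem', hdlt⟩ := hcon
    have h1 : M₂.nrm (T d) ω ≤ e ω * M₁.nrm d ω := by
      rw [← he]
      calc M₂.nrm (T d) ω ≤ (η * M₁.nrm d) ω := hle
      _ = η ω * M₁.nrm d ω := by rw [hmul]; rfl
    have h2 : e ω * M₁.nrm d ω ≤ (m:ℝ) * M₁.nrm d ω :=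
      mul_le_mul_of_nonneg_right hem' hd0
    have h3 : (m:ℝ) * M₁.nrm d ω < (m:ℝ) * (ε / m) :=
      mul_lt_mul_of_pos_left hdlt hmpos
    have h4 : (m:ℝ) * (ε / m) = ε := by field_simp
    rw [hTd] at hεle
    linarith
  calc P {ω | ε ≤ M₂.nrm (T (u n) - T x) ω}
      ≤ P ({ω | (m:ℝ) < e ω} ∪ {ω | ε / m ≤ M₁.nrm d ω}) := by
        apply measure_mono_ae
        filter_upwards [hgood] with ω hω hmem
        rcases hω hmem with h | h
        · exact Or.inl h
        · exact Or.inr h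
  _ ≤ P {ω | (m:ℝ) < e ω} + P {ω | ε / m ≤ M₁.nrm d ω} := measure_union_le _ _
  _ ≤ δ / 2 + δ / 2 := add_le_add hmP hn
  _ = δ := ENNReal.add_halves δ

end Stmt1Helpers3

section Stmt1Helpers4

open MeasureTheory Filter Set RNModuleStr
open scoped ENNReal NNReal Topology

variable {Ω : Type*} [MeasurableSpace Ω] {P : Measure Ω}
variable {X₁ X₂ : Type*} [AddCommGroup X₁] [AddCommGroup X₂]
variable (M₁ : RNModuleStr P X₁) (M₂ : RNModuleStr P X₂)

theorem continuous_asBounded [IsProbabilityMeasure P] (T : X₁ → X₂)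
    (hT : IsModuleHom M₁ M₂ T) (hc : RNContinuousMap M₁ M₂ T) : ASBounded M₁ M₂ T := by
  classical
  have hT0 : T 0 = 0 := by
    have h := hT.1 0 0
    rw [add_zero] at h
    exact (left_eq_add.mp h)
  have hone : (0 : Ω →ₘ[P] ℝ) ≤ 1 := by
    rw [← AEEqFun.coeFn_le]
    filter_upwards [AEEqFun.coeFn_zero (β := ℝ) (μ := P), AEEqFun.coeFn_one (β := ℝ) (μ := P)]
      with ω e1 e2
    rw [e1, e2]; norm_num
  have hmaxoa : ∀ a b : ℝ, ENNReal.ofReal (Real.arctan (max a b)) =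
      ENNReal.ofReal (Real.arctan a) ⊔ ENNReal.ofReal (Real.arctan b) := by
    intro a b
    rw [Real.arctan_strictMono.monotone.map_max]
    exact Monotone.map_max (fun _ _ hab => ENNReal.ofReal_le_ofReal hab)
  -- the functional I
  set I : (Ω →ₘ[P] ℝ) → ℝ≥0∞ :=
    fun g => ∫⁻ ω, ENNReal.ofReal (Real.arctan (g ω)) ∂P with hI
  have I_le : ∀ g, I g ≤ ENNReal.ofReal (Real.pi / 2) := by
    intro g
    calc I g ≤ ∫⁻ _, ENNReal.ofReal (Real.pi / 2) ∂P :=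
      lintegral_mono fun ω => ENNReal.ofReal_le_ofReal (Real.arctan_lt_pi_div_two _).le
    _ = ENNReal.ofReal (Real.pi / 2) := by simp [lintegral_const]
  have I_mono : ∀ {g g' : Ω →ₘ[P] ℝ}, g ≤ g' → I g ≤ I g' := by
    intro g g' hgg
    apply lintegral_mono_ae
    filter_upwards [AEEqFun.coeFn_le.mpr hgg] with ω hω
    exact ENNReal.ofReal_le_ofReal (Real.arctan_strictMono.monotone hω)
  set s : ℝ≥0∞ := ⨆ y : {y : X₁ // M₁.nrm y ≤ 1}, I (M₂.nrm (T y.1)) with hs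
  have hs_top : s ≠ ⊤ :=
    ne_top_of_le_ne_top ENNReal.ofReal_ne_top (iSup_le fun y => I_le _)
  have hmem_le : ∀ y : X₁, M₁.nrm y ≤ 1 → I (M₂.nrm (T y)) ≤ s := by
    intro y hy
    exact le_iSup (fun y : {y : X₁ // M₁.nrm y ≤ 1} => I (M₂.nrm (T y.1))) ⟨y, hy⟩
  have hnrm0 : M₁.nrm (0 : X₁) ≤ 1 := by rw [M₁.nrm_zero]; exact hone
  -- choose an approximating sequence for the supremum
  have hx : ∀ n : ℕ, ∃ y : X₁, M₁.nrm y ≤ 1 ∧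
      s < I (M₂.nrm (T y)) + ((n : ℝ≥0∞) + 1)⁻¹ := by
    intro n
    set ε : ℝ≥0∞ := ((n : ℝ≥0∞) + 1)⁻¹ with hε
    have hεne : ((n : ℝ≥0∞) + 1) ≠ ⊤ :=
      ENNReal.add_ne_top.mpr ⟨ENNReal.natCast_ne_top n, ENNReal.one_ne_top⟩
    have hε0 : ε ≠ 0 := by
      rw [hε, ENNReal.inv_ne_zero]
      exact hεne
    have hε_top : ε ≠ ⊤ := by
      rw [hε, ENNReal.inv_ne_top]
      simp
    rcases lt_or_ge s ε with hεs | hεs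
    · exact ⟨0, hnrm0, lt_of_lt_of_le hεs le_add_self⟩
    · have hs0 : s ≠ 0 := by
        intro h0; rw [h0] at hεs; exact hε0 (le_zero_iff.mp hεs)
      have h1 : s - ε < s := ENNReal.sub_lt_self hs_top hs0 hε0
      rw [hs, lt_iSup_iff] at h1
      obtain ⟨⟨y, hy⟩, hlt⟩ := h1
      refine ⟨y, hy, ?_⟩
      have h2 := (ENNReal.sub_lt_iff_lt_right hε_top hεs).mp (by rw [hs]; exact hlt)
      exact h2
  choose xseq hx1 hx2 using hx
  -- combine into an increasing sequence via exists_sup_point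
  choose W hW1 hW2 using fun a b => exists_sup_point M₁ M₂ T hT a b
  set z : ℕ → X₁ := fun n =>
    Nat.rec (motive := fun _ => X₁) (xseq 0) (fun n zn => W (xseq (n + 1)) zn) n with hz
  have hz_succ : ∀ n, z (n + 1) = W (xseq (n + 1)) (z n) := fun n => rfl
  have hz1 : ∀ n, M₁.nrm (z n) ≤ 1 := by
    intro n
    induction n with
    | zero => exact hx1 0
    | succ n ih =>
      rw [hz_succ]
      exact le_trans (hW1 (xseq (n + 1)) (z n)) (sup_le (hx1 (n + 1)) ih)
  set g : ℕ → (Ω →ₘ[P] ℝ) := fun n => M₂.nrm (T (z n)) with hg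
  have hg_succ : ∀ n, g (n + 1) = M₂.nrm (T (xseq (n + 1))) ⊔ g n := by
    intro n
    show M₂.nrm (T (z (n + 1))) = _
    rw [hz_succ]
    exact hW2 (xseq (n + 1)) (z n)
  have hg_mono : Monotone g :=
    monotone_nat_of_le_succ fun n => by rw [hg_succ]; exact le_sup_right
  have hgx : ∀ n, M₂.nrm (T (xseq n)) ≤ g n := by
    intro n
    cases n with
    | zero => exact le_refl _
    | succ n => rw [hg_succ]; exact le_sup_left
  have hIg_le : ∀ n, I (g n) ≤ s := fun n => hmem_le (z n) (hz1 n)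
  have hIg_lb : ∀ n, s < I (g n) + ((n : ℝ≥0∞) + 1)⁻¹ :=
    fun n => lt_of_lt_of_le (hx2 n) (add_le_add (I_mono (hgx n)) le_rfl)
  -- measurable, everywhere-monotone, nonnegative representatives
  choose f hfm hfe using fun n => (g n).aestronglyMeasurable.aemeasurable
  set f' : ℕ → Ω → ℝ := fun n =>
    Nat.rec (motive := fun _ => Ω → ℝ) (fun ω => max (f 0 ω) 0)
      (fun n fn ω => max (f (n + 1) ω) (fn ω)) n with hf'
  have hf'_succ : ∀ n, f' (n + 1) = fun ω => max (f (n + 1) ω) (f' n ω) := fun n => rfl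
  have hf'm : ∀ n, Measurable (f' n) := by
    intro n
    induction n with
    | zero => exact (hfm 0).max measurable_const
    | succ n ih => rw [hf'_succ]; exact (hfm (n + 1)).max ih
  have hf'0 : ∀ n ω, 0 ≤ f' n ω := by
    intro n
    induction n with
    | zero => exact fun ω => le_max_right _ _
    | succ n ih => intro ω; rw [hf'_succ]; exact le_trans (ih ω) (le_max_right _ _)
  have hf'mono : ∀ ω, Monotone fun n => f' n ω := by
    intro ω
    apply monotone_nat_of_le_succ
    intro n
    rw [hf'_succ]
    exact le_max_right _ _
  have hf'e : ∀ n, ⇑(g n) =ᵐ[P] f' n := by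
    intro n
    induction n with
    | zero =>
      filter_upwards [hfe 0, M₂.nrm_coeFn_nonneg (T (z 0))] with ω e1 e2
      show g 0 ω = max (f 0 ω) 0
      rw [← e1, max_eq_left e2]
    | succ n ih =>
      filter_upwards [ih, hfe (n + 1),
        AEEqFun.coeFn_le.mpr (hg_mono (Nat.le_succ n))] with ω e1 e2 e3
      rw [hf'_succ]
      show g (n + 1) ω = max (f (n + 1) ω) (f' n ω)
      rw [← e2, max_eq_left]
      rw [← e1]
      exact e3
  have hIg_eq : ∀ n, I (g n) = ∫⁻ ω, ENNReal.ofReal (Real.arctan (f' n ω)) ∂P := by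
    intro n
    apply lintegral_congr_ae
    filter_upwards [hf'e n] with ω e
    rw [e]
  -- the candidate bound as an ℝ≥0∞-valued function
  set h : Ω → ℝ≥0∞ := fun ω => ⨆ n, ENNReal.ofReal (f' n ω) with hh
  have hhm : Measurable h :=
    Measurable.iSup fun n => ENNReal.measurable_ofReal.comp (hf'm n)
  -- h is a.e. finite
  have hnull : P {ω | h ω = ⊤} = 0 := by
    by_contra hc0
    set c := P {ω | h ω = ⊤} with hcdef
    have hfin : c ≠ ⊤ := measure_ne_top _ _
    have hc2 : c / 2 < c := ENNReal.half_lt_self hc0 hfin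
    have hk : ∀ k : ℕ, ∃ n : ℕ,
        c / 2 ≤ P ({ω | h ω = ⊤} ∩ {ω | (k : ℝ) + 1 ≤ f' n ω}) := by
      intro k
      set B : ℕ → Set Ω := fun n => {ω | h ω = ⊤} ∩ {ω | (k : ℝ) + 1 ≤ f' n ω} with hB
      have hmono : Monotone B := by
        intro m n hmn
        exact inter_subset_inter_right _ fun ω hω => le_trans hω (hf'mono ω hmn)
      have hU : ⋃ n, B n = {ω | h ω = ⊤} := by
        apply subset_antisymm (iUnion_subset fun n => inter_subset_left)
        intro ω hω
        have h1 : ENNReal.ofReal ((k : ℝ) + 1) < h ω := by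
          rw [mem_setOf_eq] at hω
          rw [hω]; exact ENNReal.ofReal_lt_top
        rw [hh, lt_iSup_iff] at h1
        obtain ⟨n, hn⟩ := h1
        refine mem_iUnion.mpr ⟨n, hω, ?_⟩
        exact ((ENNReal.ofReal_lt_ofReal_iff_of_nonneg (by positivity)).mp hn).le
      have htd := tendsto_measure_iUnion_atTop (μ := P) hmono
      rw [hU] at htd
      obtain ⟨n, hn⟩ := (htd.eventually (lt_mem_nhds hc2)).exists
      exact ⟨n, hn.le⟩
    choose nk hnk using hk
    set u : ℕ → X₁ := fun k => M₁.rsmul (1 / ((k : ℝ) + 1)) (z (nk k)) with hu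
    have huk : ∀ k, ∀ᵐ ω ∂P, M₁.nrm (u k) ω ≤ 1 / ((k : ℝ) + 1) ∧
        M₁.nrm (u k) ω = (1 / ((k : ℝ) + 1)) * M₁.nrm (z (nk k)) ω := by
      intro k
      have heq : M₁.nrm (u k) = |AEEqFun.const Ω (1 / ((k : ℝ) + 1))| * M₁.nrm (z (nk k)) :=
        M₁.nrm_smul _ _
      filter_upwards [heq ▸ AEEqFun.coeFn_mul
          (|AEEqFun.const Ω (1 / ((k : ℝ) + 1))|) (M₁.nrm (z (nk k))),
        AEEqFun.coeFn_abs (AEEqFun.const Ω (1 / ((k : ℝ) + 1))),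
        AEEqFun.coeFn_const (β := ℝ) (μ := P) Ω (1 / ((k : ℝ) + 1)),
        AEEqFun.coeFn_le.mpr (hz1 (nk k)), AEEqFun.coeFn_one (β := ℝ) (μ := P),
        M₁.nrm_coeFn_nonneg (z (nk k))] with ω e1 e2 e3 e4 e5 e6
      have hpos : (0 : ℝ) < 1 / ((k : ℝ) + 1) := by positivity
      have he : M₁.nrm (u k) ω = (1 / ((k : ℝ) + 1)) * M₁.nrm (z (nk k)) ω := by
        rw [e1]
        simp only [Pi.mul_apply]
        rw [e2, e3]
        have habs : |Function.const Ω (1 / ((k : ℝ) + 1)) ω| = 1 / ((k : ℝ) + 1) := by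
          simp only [Function.const_apply]
          exact abs_of_pos hpos
        rw [habs]
      refine ⟨?_, he⟩
      rw [he]
      have e4' : M₁.nrm (z (nk k)) ω ≤ 1 := by
        rw [e5] at e4
        simpa using e4
      have h9 := mul_le_mul_of_nonneg_left e4' hpos.le
      simpa using h9
    have hu0 : M₁.TendstoRN u atTop 0 := by
      intro ε hε
      have hev : ∀ᶠ k : ℕ in atTop, P {ω | ε ≤ M₁.nrm (u k - 0) ω} = 0 := by
        filter_upwards [tendsto_one_div_add_atTop_nhds_zero_nat.eventually
          (gt_mem_nhds hε)] with k hk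
        have hsub : u k - 0 = u k := sub_zero _
        rw [hsub]
        refine le_antisymm ?_ zero_le
        have hm : P {ω | ε ≤ M₁.nrm (u k) ω} ≤ P (∅ : Set Ω) := by
          apply measure_mono_ae
          filter_upwards [huk k] with ω hω hmem
          exact absurd hmem (not_le.mpr (lt_of_le_of_lt hω.1 hk))
        simpa using hm
      exact Tendsto.congr' (by filter_upwards [hev] with k hk; exact hk.symm)
        tendsto_const_nhds
    have hlow : ∀ k, c / 2 ≤ P {ω | 1 ≤ M₂.nrm (T (u k) - T 0) ω} := by
      intro k
      refine le_trans (hnk k) (measure_mono_ae ?_)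
      have hTu : T (u k) = M₂.rsmul (1 / ((k : ℝ) + 1)) (T (z (nk k))) := hT.2 _ _
      have heq2 : M₂.nrm (T (u k) - T 0)
          = |AEEqFun.const Ω (1 / ((k : ℝ) + 1))| * M₂.nrm (T (z (nk k))) := by
        rw [hT0, sub_zero, hTu]
        exact M₂.nrm_smul _ _
      filter_upwards [heq2 ▸ AEEqFun.coeFn_mul
          (|AEEqFun.const Ω (1 / ((k : ℝ) + 1))|) (M₂.nrm (T (z (nk k)))),
        AEEqFun.coeFn_abs (AEEqFun.const Ω (1 / ((k : ℝ) + 1))),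
        AEEqFun.coeFn_const (β := ℝ) (μ := P) Ω (1 / ((k : ℝ) + 1)),
        hf'e (nk k)] with ω e1 e2 e3 e4 hmem
      show (1:ℝ) ≤ M₂.nrm (T (u k) - T 0) ω
      have hkf : (k : ℝ) + 1 ≤ f' (nk k) ω := hmem.2
      have he : M₂.nrm (T (u k) - T 0) ω
          = (1 / ((k : ℝ) + 1)) * M₂.nrm (T (z (nk k))) ω := by
        rw [e1]
        simp only [Pi.mul_apply]
        rw [e2, e3]
        have habs : |Function.const Ω (1 / ((k : ℝ) + 1)) ω| = 1 / ((k : ℝ) + 1) := by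
          simp only [Function.const_apply]
          exact abs_of_pos (by positivity : (0:ℝ) < 1 / ((k : ℝ) + 1))
        rw [habs]
      rw [he]
      calc (1 : ℝ) = (1 / ((k : ℝ) + 1)) * ((k : ℝ) + 1) := by field_simp
      _ ≤ (1 / ((k : ℝ) + 1)) * M₂.nrm (T (z (nk k))) ω := by
          apply mul_le_mul_of_nonneg_left _ (by positivity)
          rw [e4]; exact hkf
    have htend := hc u 0 hu0 1 one_pos
    have hfinal : c / 2 ≤ 0 := ge_of_tendsto htend (Eventually.of_forall hlow)
    rw [le_zero_iff, ENNReal.div_eq_zero_iff] at hfinal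
    rcases hfinal with h1 | h1
    · exact hc0 h1
    · exact (by norm_num : (2 : ℝ≥0∞) ≠ ⊤) h1
  -- the bound η
  set η₀ : Ω → ℝ := fun ω => (h ω).toReal with hη₀
  have hη₀m : Measurable η₀ := hhm.ennreal_toReal
  set η : Ω →ₘ[P] ℝ := AEEqFun.mk η₀ hη₀m.aestronglyMeasurable with hηdef
  have hηc : ⇑η =ᵐ[P] η₀ := AEEqFun.coeFn_mk _ _
  have hfin_ae : ∀ᵐ ω ∂P, h ω ≠ ⊤ := by
    rw [ae_iff]
    simpa using hnull
  have hη0 : 0 ≤ η := by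
    rw [← AEEqFun.coeFn_le]
    filter_upwards [hηc, AEEqFun.coeFn_zero (β := ℝ) (μ := P)] with ω e1 e2
    rw [e1, e2]
    exact ENNReal.toReal_nonneg
  -- pointwise limit facts where h is finite
  have hlim : ∀ ω, h ω ≠ ⊤ →
      Tendsto (fun n => f' n ω) atTop (𝓝 (η₀ ω)) ∧ ∀ n, f' n ω ≤ η₀ ω := by
    intro ω hne
    have h1 : Tendsto (fun n => ENNReal.ofReal (f' n ω)) atTop (𝓝 (h ω)) := by
      rw [hh]
      exact tendsto_atTop_iSup fun a b hab => ENNReal.ofReal_le_ofReal (hf'mono ω hab)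
    constructor
    · have h2 := (ENNReal.tendsto_toReal hne).comp h1
      have h3 : (fun n => (ENNReal.ofReal (f' n ω)).toReal) = fun n => f' n ω := by
        funext n; exact ENNReal.toReal_ofReal (hf'0 n ω)
      rw [Function.comp_def, h3] at h2
      exact h2
    · intro n
      have h4 : ENNReal.ofReal (f' n ω) ≤ h ω := le_iSup (fun n => ENNReal.ofReal (f' n ω)) n
      have h5 := ENNReal.toReal_mono hne h4
      rwa [ENNReal.toReal_ofReal (hf'0 n ω)] at h5
  -- the limit of the functional values: ⨆ n, I (g n) = s
  have hsup_I : (⨆ n, I (g n)) = s := by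
    apply le_antisymm (iSup_le hIg_le)
    apply ENNReal.le_of_forall_pos_le_add
    intro ε hε _
    obtain ⟨n, hn⟩ := ENNReal.exists_inv_nat_lt
      (by exact_mod_cast hε.ne' : ((ε : ℝ≥0∞)) ≠ 0)
    have hn' : ((n : ℝ≥0∞) + 1)⁻¹ ≤ (ε : ℝ≥0∞) :=
      le_trans (ENNReal.inv_le_inv' le_self_add) hn.le
    calc s ≤ I (g n) + ((n : ℝ≥0∞) + 1)⁻¹ := (hIg_lb n).le
    _ ≤ (⨆ n, I (g n)) + ε := add_le_add (le_iSup (fun n => I (g n)) n) hn'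
  -- F = sup of ofReal ∘ arctan ∘ f'
  set F : Ω → ℝ≥0∞ := fun ω => ⨆ n, ENNReal.ofReal (Real.arctan (f' n ω)) with hF
  have hoam : ∀ n, Measurable fun ω => ENNReal.ofReal (Real.arctan (f' n ω)) := fun n =>
    ENNReal.measurable_ofReal.comp (Real.continuous_arctan.measurable.comp (hf'm n))
  have hFm : Measurable F := Measurable.iSup hoam
  have hIF : ∫⁻ ω, F ω ∂P = s := by
    rw [hF]
    rw [lintegral_iSup hoam
      (fun a b hab ω => ENNReal.ofReal_le_ofReal
        (Real.arctan_strictMono.monotone (hf'mono ω hab)))]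
    rw [← hsup_I]
    congr 1
    funext n
    exact (hIg_eq n).symm
  have hF_eq : ∀ᵐ ω ∂P, F ω = ENNReal.ofReal (Real.arctan (η₀ ω)) := by
    filter_upwards [hfin_ae] with ω hne
    have h1 : Tendsto (fun n => ENNReal.ofReal (Real.arctan (f' n ω))) atTop
        (𝓝 (ENNReal.ofReal (Real.arctan (η₀ ω)))) := by
      apply (ENNReal.continuous_ofReal.tendsto _).comp
      exact (Real.continuous_arctan.tendsto _).comp (hlim ω hne).1
    have h2 : Tendsto (fun n => ENNReal.ofReal (Real.arctan (f' n ω))) atTop (𝓝 (F ω)) := by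
      rw [hF]
      exact tendsto_atTop_iSup fun a b hab => ENNReal.ofReal_le_ofReal
        (Real.arctan_strictMono.monotone (hf'mono ω hab))
    exact tendsto_nhds_unique h2 h1
  -- Step A: images of the unit ball are bounded by η
  have hA : ∀ y : X₁, M₁.nrm y ≤ 1 → M₂.nrm (T y) ≤ η := by
    intro y hy
    obtain ⟨q, hqm, hqe⟩ := (M₂.nrm (T y)).aestronglyMeasurable.aemeasurable
    set q' : Ω → ℝ := fun ω => max (q ω) 0 with hq'
    have hq'm : Measurable q' := hqm.max measurable_const
    have hq'e : ⇑(M₂.nrm (T y)) =ᵐ[P] q' := by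
      filter_upwards [hqe, M₂.nrm_coeFn_nonneg (T y)] with ω e1 e2
      rw [hq']
      show M₂.nrm (T y) ω = max (q ω) 0
      rw [← e1, max_eq_left e2]
    have hIn : ∀ n, ∫⁻ ω, (ENNReal.ofReal (Real.arctan (q' ω))
        ⊔ ENNReal.ofReal (Real.arctan (f' n ω))) ∂P ≤ s := by
      intro n
      have hw1 : M₁.nrm (W y (z n)) ≤ 1 :=
        le_trans (hW1 y (z n)) (sup_le hy (hz1 n))
      refine le_trans (le_of_eq ?_) (hmem_le _ hw1)
      apply lintegral_congr_ae
      have hw2 : M₂.nrm (T (W y (z n))) = M₂.nrm (T y) ⊔ g n := hW2 y (z n)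
      filter_upwards [hw2 ▸ AEEqFun.coeFn_sup (M₂.nrm (T y)) (g n), hq'e, hf'e n]
        with ω e1 e2 e3
      rw [e1, e2, e3, ← hmaxoa]
    have hsupmax : ∫⁻ ω, (ENNReal.ofReal (Real.arctan (q' ω)) ⊔ F ω) ∂P ≤ s := by
      have hpt : ∀ ω, (ENNReal.ofReal (Real.arctan (q' ω)) ⊔ F ω)
          = ⨆ n, (ENNReal.ofReal (Real.arctan (q' ω))
            ⊔ ENNReal.ofReal (Real.arctan (f' n ω))) := by
        intro ω
        rw [hF, iSup_sup_eq, iSup_const]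
      calc ∫⁻ ω, (ENNReal.ofReal (Real.arctan (q' ω)) ⊔ F ω) ∂P
          = ∫⁻ ω, ⨆ n, (ENNReal.ofReal (Real.arctan (q' ω))
            ⊔ ENNReal.ofReal (Real.arctan (f' n ω))) ∂P := by
            apply lintegral_congr_ae
            exact Eventually.of_forall hpt
      _ = ⨆ n, ∫⁻ ω, (ENNReal.ofReal (Real.arctan (q' ω))
            ⊔ ENNReal.ofReal (Real.arctan (f' n ω))) ∂P := by
            apply lintegral_iSup
            · intro n
              exact ((ENNReal.measurable_ofReal.comp
                (Real.continuous_arctan.measurable.comp hq'm))).max (hoam n)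
            · intro a b hab ω
              exact sup_le_sup_left (ENNReal.ofReal_le_ofReal
                (Real.arctan_strictMono.monotone (hf'mono ω hab))) _
      _ ≤ s := iSup_le hIn
    have hcomp : F =ᵐ[P] fun ω => (ENNReal.ofReal (Real.arctan (q' ω)) ⊔ F ω) := by
      apply ae_eq_of_ae_le_of_lintegral_le
      · exact Eventually.of_forall fun ω => le_sup_right
      · rw [hIF]; exact hs_top
      · exact (((ENNReal.measurable_ofReal.comp
          (Real.continuous_arctan.measurable.comp hq'm))).max hFm).aemeasurable
      · rw [hIF]; exact hsupmax
    rw [← AEEqFun.coeFn_le]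
    filter_upwards [hq'e, hηc, hcomp, hF_eq, hfin_ae] with ω e1 e2 e3 e4 hne
    rw [e1, e2]
    have h5 : ENNReal.ofReal (Real.arctan (q' ω)) ≤ F ω := by
      conv_rhs => rw [e3]
      exact le_sup_left
    rw [e4] at h5
    have h6 : 0 ≤ Real.arctan (η₀ ω) := by
      rw [← Real.arctan_zero]
      exact Real.arctan_strictMono.monotone ENNReal.toReal_nonneg
    have h7 := (ENNReal.ofReal_le_ofReal_iff h6).mp h5
    exact Real.arctan_strictMono.le_iff_le.mp h7
  -- Step B: general bound
  refine ⟨η, hη0, ?_⟩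
  intro x
  have hbn : ∀ n : ℕ, ∀ᵐ ω ∂P, M₂.nrm (T x) ω ≤
      η ω * M₁.nrm x ω + η ω * (1 / ((n : ℝ) + 1)) := by
    intro n
    set cε : ℝ := 1 / ((n : ℝ) + 1) with hcε
    have hcpos : (0 : ℝ) < cε := by positivity
    set φ : ℝ → ℝ := fun t => (max t 0 + cε)⁻¹ with hφdef
    have hφ : Continuous φ := by
      apply Continuous.inv₀
      · exact (continuous_id.max continuous_const).add continuous_const
      · intro t
        have : (0:ℝ) < max t 0 + cε := by positivity
        exact this.ne'
    set ξ : Ω →ₘ[P] ℝ := AEEqFun.comp φ hφ (M₁.nrm x) with hξdef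
    have hξc : ⇑ξ =ᵐ[P] φ ∘ ⇑(M₁.nrm x) := AEEqFun.coeFn_comp φ hφ (M₁.nrm x)
    have hy1 : M₁.nrm (M₁.smul ξ x) ≤ 1 := by
      rw [M₁.nrm_smul]
      rw [← AEEqFun.coeFn_le]
      filter_upwards [AEEqFun.coeFn_mul (|ξ|) (M₁.nrm x), AEEqFun.coeFn_abs ξ, hξc,
        M₁.nrm_coeFn_nonneg x, AEEqFun.coeFn_one (β := ℝ) (μ := P)] with ω e1 e2 e3 e4 e5
      rw [e1, e5]
      simp only [Pi.mul_apply, Pi.one_apply]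
      rw [e2, e3]
      simp only [Function.comp_apply, hφdef]
      rw [max_eq_left e4]
      have hpos : (0:ℝ) < M₁.nrm x ω + cε := by positivity
      rw [abs_of_pos (inv_pos.mpr hpos)]
      rw [← div_eq_inv_mul, div_le_one hpos]
      linarith
    have hTy := hA _ hy1
    have hTyeq : M₂.nrm (T (M₁.smul ξ x)) = |ξ| * M₂.nrm (T x) := by
      rw [hT.2]; exact M₂.nrm_smul ξ (T x)
    rw [hTyeq] at hTy
    filter_upwards [AEEqFun.coeFn_le.mpr hTy, AEEqFun.coeFn_mul (|ξ|) (M₂.nrm (T x)),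
      AEEqFun.coeFn_abs ξ, hξc, M₁.nrm_coeFn_nonneg x] with ω e1 e2 e3 e4 e5
    have hpos : (0:ℝ) < M₁.nrm x ω + cε := by positivity
    have h8 : (M₁.nrm x ω + cε)⁻¹ * M₂.nrm (T x) ω ≤ η ω := by
      rw [e2] at e1
      simp only [Pi.mul_apply] at e1
      rw [e3, e4] at e1
      simp only [Function.comp_apply, hφdef] at e1
      rw [max_eq_left e5, abs_of_pos (inv_pos.mpr hpos)] at e1
      exact e1
    have h9 := mul_le_mul_of_nonneg_left h8 hpos.le
    rw [← mul_assoc, mul_inv_cancel₀ hpos.ne', one_mul] at h9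
    calc M₂.nrm (T x) ω ≤ (M₁.nrm x ω + cε) * η ω := h9
    _ = η ω * M₁.nrm x ω + η ω * cε := by ring
  rw [← AEEqFun.coeFn_le]
  filter_upwards [ae_all_iff.mpr hbn, AEEqFun.coeFn_mul η (M₁.nrm x)] with ω hall hmul
  have hlim2 : Tendsto (fun n : ℕ => η ω * M₁.nrm x ω + η ω * (1 / ((n:ℝ) + 1))) atTop
      (𝓝 (η ω * M₁.nrm x ω)) := by
    have h1 := (tendsto_const_nhds (x := η ω * M₁.nrm x ω) (f := atTop (α := ℕ))).add
      ((tendsto_const_nhds (x := η ω) (f := atTop (α := ℕ))).mul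
        tendsto_one_div_add_atTop_nhds_zero_nat)
    simpa using h1
  have hfin2 : M₂.nrm (T x) ω ≤ η ω * M₁.nrm x ω := ge_of_tendsto' hlim2 hall
  rw [hmul]
  simpa using hfin2

end Stmt1Helpers4

/-- a linear operator (module homomorphism) `T : X₁ → X₂` between RN
modules is a.s. bounded iff it is continuous for the `(ε,λ)`-topologies
(sequential continuity, equivalent by metrizability). -/
theorem stmt1 {Ω : Type*} [MeasurableSpace Ω] (P : Measure Ω) [IsProbabilityMeasure P]
    {X₁ X₂ : Type*} [AddCommGroup X₁] [AddCommGroup X₂]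
    (M₁ : RNModuleStr P X₁) (M₂ : RNModuleStr P X₂)
    (T : X₁ → X₂) (hT : IsModuleHom M₁ M₂ T) :
    ASBounded M₁ M₂ T ↔ RNContinuousMap M₁ M₂ T :=
  ⟨asBounded_continuous M₁ M₂ T hT, continuous_asBounded M₁ M₂ T hT⟩
end
end

section
/- Let X₁, X₂ be RN modules and T ∈ B(X₁,X₂) an almost surely bounded linear operator. Then the operator L⁰-norm ‖T‖ := ⋀{η ∈ L⁰₊(F) : ‖Tz‖₂ ≤ η‖z‖₁ for all z ∈ X₁} satisfies ‖T‖ = ⋁{‖Tx‖₂ : x ∈ X₁, ‖x‖₁ ≤ 1}, where 1 is the unit element of L⁰(F,ℝ). -/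
open MeasureTheory Filter Set
noncomputable section

open RNModuleStr

/-- for an a.s. bounded module homomorphism `T`, the operator
`L⁰`-norm `‖T‖ = ⋀{η ∈ L⁰₊ : ‖Tz‖₂ ≤ η‖z‖₁ ∀z}` satisfies
`‖T‖ = ⋁{‖Tx‖₂ : ‖x‖₁ ≤ 1}`. -/
theorem stmt2 {Ω : Type*} [MeasurableSpace Ω] (P : Measure Ω) [IsProbabilityMeasure P]
    {X₁ X₂ : Type*} [AddCommGroup X₁] [AddCommGroup X₂]
    (M₁ : RNModuleStr P X₁) (M₂ : RNModuleStr P X₂)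
    (T : X₁ → X₂) (hT : IsModuleHom M₁ M₂ T) (hTb : ASBounded M₁ M₂ T)
    (Nrm : Ω →ₘ[P] ℝ)
    (hglb : IsGLB {η : Ω →ₘ[P] ℝ | 0 ≤ η ∧ ∀ x : X₁, M₂.nrm (T x) ≤ η * M₁.nrm x} Nrm) :
    IsLUB {g : Ω →ₘ[P] ℝ | ∃ x : X₁, M₁.nrm x ≤ 1 ∧ g = M₂.nrm (T x)} Nrm := by
  obtain ⟨η₀, hη₀, hbd⟩ := hTb
  -- basic algebraic facts
  have hT0 : T 0 = 0 := by
    have h := hT.1 0 0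
    simp only [add_zero] at h
    exact (left_eq_add.mp h)
  have hsmul0 : ∀ y : X₁, M₁.smul 0 y = 0 := by
    intro y
    have h := M₁.add_smul' 0 0 y
    simp only [add_zero] at h
    exact (left_eq_add.mp h)
  have habs0 : |(0 : Ω →ₘ[P] ℝ)| = 0 := by
    refine AEEqFun.ext ?_
    filter_upwards [AEEqFun.coeFn_abs (0 : Ω →ₘ[P] ℝ), AEEqFun.coeFn_zero (β := ℝ) (μ := P)]
      with ω h1 h2
    rw [h1, h2]
    simp
  have hzm : ∀ h : Ω →ₘ[P] ℝ, (0 : Ω →ₘ[P] ℝ) * h = 0 := by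
    intro h
    refine AEEqFun.ext ?_
    filter_upwards [AEEqFun.coeFn_mul (0 : Ω →ₘ[P] ℝ) h, AEEqFun.coeFn_zero (β := ℝ) (μ := P)]
      with ω h1 h2
    simp only [Pi.mul_apply, Pi.zero_apply] at h1 h2
    rw [h1, h2, zero_mul]
  have hnrm1_0 : M₁.nrm 0 = 0 := by
    have h := M₁.nrm_smul 0 0
    rw [hsmul0, habs0, hzm] at h
    exact h
  have hnrm2_0 : M₂.nrm (T 0) = 0 := by
    rw [hT0]
    have hsmul0' : M₂.smul 0 (0 : X₂) = 0 := by
      have h := M₂.add_smul' 0 0 0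
      simp only [add_zero] at h
      exact (left_eq_add.mp h)
    have h := M₂.nrm_smul 0 0
    rw [hsmul0', habs0, hzm] at h
    exact h
  have hzero_le_one : (0 : Ω →ₘ[P] ℝ) ≤ 1 := by
    rw [← AEEqFun.coeFn_le]
    filter_upwards [AEEqFun.coeFn_zero (β := ℝ) (μ := P), AEEqFun.coeFn_one (β := ℝ) (μ := P)]
      with ω h0 h1
    rw [h0, h1]; exact zero_le_one
  constructor
  · -- Nrm is an upper bound
    rintro g ⟨x, hx, rfl⟩
    refine hglb.2 ?_
    rintro η ⟨hη, hηx⟩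
    rw [← AEEqFun.coeFn_le]
    have h1 : (M₂.nrm (T x) : Ω → ℝ) ≤ᵐ[P] ⇑(η * M₁.nrm x) := AEEqFun.coeFn_le.mpr (hηx x)
    have h2 : (M₁.nrm x : Ω → ℝ) ≤ᵐ[P] ⇑(1 : Ω →ₘ[P] ℝ) := AEEqFun.coeFn_le.mpr hx
    have h3 : ((0 : Ω →ₘ[P] ℝ) : Ω → ℝ) ≤ᵐ[P] ⇑η := AEEqFun.coeFn_le.mpr hη
    filter_upwards [h1, h2, h3, AEEqFun.coeFn_mul η (M₁.nrm x),
      AEEqFun.coeFn_one (β := ℝ) (μ := P), AEEqFun.coeFn_zero (β := ℝ) (μ := P)]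
      with ω h1 h2 h3 hmul hone hzero
    simp only [Pi.mul_apply, Pi.one_apply, Pi.zero_apply] at hmul hone hzero
    rw [hmul] at h1
    rw [hone] at h2
    rw [hzero] at h3
    calc M₂.nrm (T x) ω ≤ η ω * M₁.nrm x ω := h1
      _ ≤ η ω * 1 := by exact mul_le_mul_of_nonneg_left h2 h3
      _ = η ω := mul_one _
  · -- Nrm is the least upper bound
    intro g hg
    -- first: 0 ≤ g, since ‖T 0‖ = 0 belongs to the set
    have hg0 : (0 : Ω →ₘ[P] ℝ) ≤ g := by
      have : M₂.nrm (T 0) ≤ g := hg ⟨0, by rw [hnrm1_0]; exact hzero_le_one, rfl⟩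
      rwa [hnrm2_0] at this
    refine hglb.1 ⟨hg0, ?_⟩
    intro x
    -- the localization trick
    set f : Ω → ℝ := fun ω => ((M₁.nrm x : Ω → ℝ) ω)⁻¹ with hf
    have hfm : AEStronglyMeasurable f P := ((M₁.nrm x).aemeasurable.inv).aestronglyMeasurable
    set ξ : Ω →ₘ[P] ℝ := AEEqFun.mk f hfm with hξdef
    have hξ : (ξ : Ω → ℝ) =ᵐ[P] f := AEEqFun.coeFn_mk f hfm
    have hnn : ((0 : Ω →ₘ[P] ℝ) : Ω → ℝ) ≤ᵐ[P] ⇑(M₁.nrm x) := AEEqFun.coeFn_le.mpr (M₁.nrm_nonneg x)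
    -- ‖ξ • x‖ ≤ 1
    have hmem : M₁.nrm (M₁.smul ξ x) ≤ 1 := by
      rw [M₁.nrm_smul, ← AEEqFun.coeFn_le]
      filter_upwards [hnn, AEEqFun.coeFn_mul |ξ| (M₁.nrm x), AEEqFun.coeFn_abs ξ, hξ,
        AEEqFun.coeFn_one (β := ℝ) (μ := P), AEEqFun.coeFn_zero (β := ℝ) (μ := P)]
        with ω hnn hmul habs hξω hone hzero
      simp only [Pi.mul_apply, Pi.one_apply, Pi.zero_apply] at hmul hone hzero
      rw [hmul, habs, hξω, hone]
      rw [hzero] at hnn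
      rcases eq_or_lt_of_le hnn with h | h
      · simp [hf, ← h]
      · simp only [hf]
        rw [abs_of_nonneg (inv_nonneg.mpr hnn), inv_mul_cancel₀ (ne_of_gt h)]
    have hTle : M₂.nrm (T (M₁.smul ξ x)) ≤ g := hg ⟨M₁.smul ξ x, hmem, rfl⟩
    rw [hT.2 ξ x, M₂.nrm_smul] at hTle
    -- combine with a.s. boundedness to conclude pointwise
    rw [← AEEqFun.coeFn_le]
    have h1 : (⇑(|ξ| * M₂.nrm (T x)) : Ω → ℝ) ≤ᵐ[P] ⇑g := AEEqFun.coeFn_le.mpr hTle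
    have h2 : (M₂.nrm (T x) : Ω → ℝ) ≤ᵐ[P] ⇑(η₀ * M₁.nrm x) := AEEqFun.coeFn_le.mpr (hbd x)
    have h3 : ((0 : Ω →ₘ[P] ℝ) : Ω → ℝ) ≤ᵐ[P] ⇑(M₂.nrm (T x)) :=
      AEEqFun.coeFn_le.mpr (M₂.nrm_nonneg (T x))
    filter_upwards [h1, h2, h3, hnn, hξ, AEEqFun.coeFn_mul |ξ| (M₂.nrm (T x)),
      AEEqFun.coeFn_abs ξ, AEEqFun.coeFn_mul η₀ (M₁.nrm x),
      AEEqFun.coeFn_mul g (M₁.nrm x), AEEqFun.coeFn_zero (β := ℝ) (μ := P)]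
      with ω h1 h2 h3 hnn hξω hmul1 habs hmul2 hmul3 hzero
    simp only [Pi.mul_apply, Pi.zero_apply] at hmul1 hmul2 hmul3 hzero
    rw [hmul1, habs, hξω] at h1
    rw [hmul2] at h2
    rw [hzero] at h3 hnn
    rw [hmul3]
    set t := M₁.nrm x ω
    set u := M₂.nrm (T x) ω
    rcases eq_or_lt_of_le hnn with h | h
    · -- t = 0 : then u = 0
      have hu : u ≤ 0 := by
        calc u ≤ η₀ ω * t := h2
          _ = 0 := by rw [← h, mul_zero]
      have : u = 0 := le_antisymm hu h3
      rw [this, ← h, mul_zero]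
    · -- t > 0
      have habs' : |t⁻¹| = t⁻¹ := abs_of_nonneg (inv_nonneg.mpr h.le)
      simp only [hf, habs'] at h1
      change |t⁻¹| * u ≤ g ω at h1
      rw [habs'] at h1
      calc u = t * (t⁻¹ * u) := by
            rw [← mul_assoc, mul_inv_cancel₀ (ne_of_gt h), one_mul]
        _ ≤ t * g ω := mul_le_mul_of_nonneg_left h1 h.le
        _ = g ω * t := mul_comm _ _
end
end

section
/- Let f : [s,t] → L⁰(F,ℝ) be continuous (in the topology of convergence in probability) with ⋁_{u∈[s,t]} |f(u)| ∈ L¹(F,ℝ). Then ∫_Ω [∫_s^t f(u) du] dP = ∫_s^t [∫_Ω f(u) dP] du, where the inner integral ∫_s^t f(u) du is the Riemann integral in the complete RN module L⁰(F,ℝ). -/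
open MeasureTheory Filter Set Topology
section AuxStmt18


-- coeFn of a finset sum of AEEqFun
lemma aux_coeFn_finsetSum {Ω : Type*} [MeasurableSpace Ω] {P : Measure Ω} {ι : Type*}
    (s : Finset ι) (F : ι → (Ω →ₘ[P] ℝ)) :
    ⇑(∑ i ∈ s, F i) =ᵐ[P] fun ω => ∑ i ∈ s, F i ω := by
  classical
  induction s using Finset.induction_on with
  | empty => simp only [Finset.sum_empty]; exact AEEqFun.coeFn_zero
  | insert a s hi ih =>
    rw [Finset.sum_insert hi]
    filter_upwards [AEEqFun.coeFn_add (F a) (∑ j ∈ s, F j), ih] with ω h1 h2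
    rw [h1, Pi.add_apply, h2]
    simp [Finset.sum_insert hi]

-- core: convergence in measure + eventual domination implies convergence of integrals
lemma aux_key {Ω : Type*} [MeasurableSpace Ω] {P : Measure Ω}
    {S : ℕ → Ω → ℝ} {L : Ω → ℝ} {G : Ω → ℝ}
    (hSm : ∀ n, AEStronglyMeasurable (S n) P)
    (hLm : AEStronglyMeasurable L P)
    (hG : Integrable G P)
    (hbound : ∀ᶠ n in atTop, ∀ᵐ ω ∂P, |S n ω| ≤ G ω)
    (h : TendstoInMeasure P S atTop L) :
    Integrable L P ∧ Tendsto (fun n => ∫ ω, S n ω ∂P) atTop (𝓝 (∫ ω, L ω ∂P)) := by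
  obtain ⟨φ, hφmono, hφae⟩ := h.exists_seq_tendsto_ae
  have hphi : Tendsto φ atTop atTop := hφmono.tendsto_atTop
  have hbφ : ∀ᶠ n in atTop, ∀ᵐ ω ∂P, |S (φ n) ω| ≤ G ω := hphi.eventually hbound
  have hLG : ∀ᵐ ω ∂P, |L ω| ≤ G ω := by
    rw [eventually_atTop] at hbφ
    obtain ⟨N, hN⟩ := hbφ
    have hall : ∀ᵐ ω ∂P, ∀ n, |S (φ (n + N)) ω| ≤ G ω :=
      ae_all_iff.2 fun n => hN (n + N) (Nat.le_add_left _ _)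
    filter_upwards [hφae, hall] with ω h1 h2
    have h1' : Tendsto (fun n => |S (φ (n + N)) ω|) atTop (𝓝 |L ω|) :=
      ((h1.comp (tendsto_add_atTop_nat N)).abs)
    exact le_of_tendsto h1' (Eventually.of_forall h2)
  have hLint : Integrable L P :=
    hG.mono' hLm (by simpa [Real.norm_eq_abs] using hLG)
  refine ⟨hLint, ?_⟩
  apply tendsto_of_subseq_tendsto
  intro ns hns
  have h' : TendstoInMeasure P (fun n => S (ns n)) atTop L := fun ε hε => (h ε hε).comp hns
  obtain ⟨ms, hmsmono, hmsae⟩ := h'.exists_seq_tendsto_ae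
  refine ⟨ms, ?_⟩
  have hb' : ∀ᶠ n in atTop, ∀ᵐ ω ∂P, ‖S (ns (ms n)) ω‖ ≤ G ω := by
    have : Tendsto (fun n => ns (ms n)) atTop atTop := hns.comp hmsmono.tendsto_atTop
    simpa [Real.norm_eq_abs] using this.eventually hbound
  exact tendsto_integral_filter_of_dominated_convergence G
    (Eventually.of_forall fun n => hSm _) hb' hG hmsae

lemma aux_riemann {s t : ℝ} (hst : s ≤ t) {F : ℝ → ℝ} (hF : ContinuousOn F (Icc s t)) :
    Tendsto (fun n : ℕ => ∑ i ∈ Finset.range n, ((t - s) / n) * F (s + (t - s) * i / n)) atTop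
      (𝓝 (∫ u in s..t, F u)) := by
  rcases eq_or_lt_of_le hst with h | hlt
  · subst h
    simp
  have hT : 0 < t - s := sub_pos.2 hlt
  rw [Metric.tendsto_atTop]
  intro ε hε
  have hFu := isCompact_Icc.uniformContinuousOn_of_continuous hF
  rw [Metric.uniformContinuousOn_iff] at hFu
  obtain ⟨δ, hδ, hδ'⟩ := hFu (ε / (2 * (t - s))) (by positivity)
  obtain ⟨N, hN⟩ := exists_nat_gt ((t - s) / δ)
  refine ⟨N + 1, fun n hn => ?_⟩
  have hn0 : 0 < (n : ℝ) := by exact_mod_cast Nat.lt_of_lt_of_le (Nat.succ_pos N) hn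
  have hn0' : (n : ℝ) ≠ 0 := ne_of_gt hn0
  have hδn : (t - s) / n < δ := by
    rw [div_lt_iff₀ hn0]
    have h1 : (t - s) / δ < n := lt_of_lt_of_le hN (by exact_mod_cast Nat.le_of_succ_le hn)
    have h2 : ((t - s) / δ) * δ < n * δ := mul_lt_mul_of_pos_right h1 hδ
    have h3 : ((t - s) / δ) * δ = t - s := by field_simp
    linarith
  obtain ⟨a, ha⟩ : ∃ a : ℕ → ℝ, a = fun i : ℕ => s + (t - s) * (i : ℝ) / n := ⟨_, rfl⟩
  have ha0 : a 0 = s := by simp [ha]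
  have han : a n = t := by rw [ha]; field_simp; ring
  have hstep : ∀ k : ℕ, a (k + 1) - a k = (t - s) / n := by
    intro k
    rw [ha]
    push_cast
    ring
  have hmono : ∀ k : ℕ, a k ≤ a (k + 1) := by
    intro k
    have h1 := hstep k
    have h2 : 0 ≤ (t - s) / (n : ℝ) := by positivity
    linarith
  have hmem : ∀ k ≤ n, a k ∈ Icc s t := by
    intro k hk
    rw [ha]
    constructor
    · have : 0 ≤ (t - s) * k / n := by positivity
      simpa using this
    · have h1 : (t - s) * (k : ℝ) ≤ (t - s) * (n : ℝ) :=
        mul_le_mul_of_nonneg_left (by exact_mod_cast hk) hT.le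
      have h2 : (t - s) * k / n ≤ t - s := by
        rw [div_le_iff₀ hn0]
        nlinarith
      simpa using by linarith
  have hsub : ∀ k < n, Icc (a k) (a (k + 1)) ⊆ Icc s t := by
    intro k hk
    exact Icc_subset_Icc (hmem k hk.le).1 (hmem (k + 1) hk).2
  have hint : ∀ k < n, IntervalIntegrable F MeasureTheory.volume (a k) (a (k + 1)) := by
    intro k hk
    apply ContinuousOn.intervalIntegrable
    rw [uIcc_of_le (hmono k)]
    exact hF.mono (hsub k hk)
  have hsum : ∫ u in s..t, F u = ∑ k ∈ Finset.range n, ∫ x in a k..a (k + 1), F x := by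
    rw [intervalIntegral.sum_integral_adjacent_intervals hint, ha0, han]
  have hFS : ∀ k : ℕ, F (s + (t - s) * k / n) = F (a k) := by intro k; rw [ha]
  simp only [hFS]
  rw [Real.dist_eq, hsum, ← Finset.sum_sub_distrib]
  have hbound : ∀ k ∈ Finset.range n,
      |((t - s) / n) * F (a k) - ∫ x in a k..a (k + 1), F x|
        ≤ (ε / (2 * (t - s))) * ((t - s) / n) := by
    intro k hk
    rw [Finset.mem_range] at hk
    have heq : ((t - s) / n) * F (a k) - (∫ x in a k..a (k + 1), F x)
        = ∫ x in a k..a (k + 1), (F (a k) - F x) := by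
      rw [intervalIntegral.integral_sub intervalIntegrable_const (hint k hk),
        intervalIntegral.integral_const, smul_eq_mul, hstep k]
    rw [heq]
    have hle := intervalIntegral.norm_integral_le_of_norm_le_const
      (C := ε / (2 * (t - s))) (f := fun x => F (a k) - F x) (a := a k) (b := a (k + 1)) ?_
    · rw [Real.norm_eq_abs] at hle
      refine hle.trans ?_
      have : |a (k + 1) - a k| = (t - s) / n := by
        rw [hstep k, abs_of_nonneg (by positivity)]
      rw [this]
    · intro x hx
      rw [uIoc_of_le (hmono k)] at hx
      have hxm : x ∈ Icc s t := hsub k hk ⟨hx.1.le, hx.2⟩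
      have hdist : dist (a k) x < δ := by
        rw [Real.dist_eq, abs_of_nonpos (by linarith [hx.1.le])]
        have h1 : x ≤ a (k + 1) := hx.2
        have h2 := hstep k
        linarith
      have h3 := hδ' (a k) (hmem k hk.le) x hxm hdist
      rw [Real.dist_eq] at h3
      rw [Real.norm_eq_abs]
      exact h3.le
  calc |∑ k ∈ Finset.range n, (((t - s) / n) * F (a k) - ∫ x in a k..a (k + 1), F x)|
      ≤ ∑ k ∈ Finset.range n, |((t - s) / n) * F (a k)
          - ∫ x in a k..a (k + 1), F x| := Finset.abs_sum_le_sum_abs _ _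
    _ ≤ ∑ _k ∈ Finset.range n, (ε / (2 * (t - s))) * ((t - s) / n) :=
        Finset.sum_le_sum hbound
    _ = ε / 2 := by
        rw [Finset.sum_const, Finset.card_range, nsmul_eq_mul]
        field_simp
    _ < ε := by linarith

end AuxStmt18


noncomputable section

/-- if `f : [s,t] → L⁰(F,ℝ)` is continuous in probability and
`⋁_{u∈[s,t]} |f(u)| ∈ L¹(F,ℝ)`, then
`∫_Ω [∫_s^t f(u) du] dP = ∫_s^t [∫_Ω f(u) dP] du`, where `∫_s^t f(u) du` is the
Riemann integral in the complete RN module `L⁰(F,ℝ)` (the limit in probability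
`I` of the uniform Riemann sums). -/
theorem stmt18 {Ω : Type*} [MeasurableSpace Ω] (P : Measure Ω) [IsProbabilityMeasure P]
    (s t : ℝ) (hst : s ≤ t) (f : ℝ → (Ω →ₘ[P] ℝ))
    (hcont : ∀ u ∈ Icc s t, ∀ ε : ℝ, 0 < ε →
      Tendsto (fun v => P {ω : Ω | ε ≤ |f v - f u| ω}) (nhdsWithin u (Icc s t)) (nhds 0))
    (g : Ω →ₘ[P] ℝ)
    (hg : IsLUB {h : Ω →ₘ[P] ℝ | ∃ u ∈ Icc s t, h = |f u|} g)
    (hgint : Integrable (g : Ω → ℝ) P)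
    (I : Ω →ₘ[P] ℝ)
    (hI : ∀ ε : ℝ, 0 < ε → Tendsto (fun n : ℕ =>
        P {ω : Ω | ε ≤ |(∑ i ∈ Finset.range n, ((t - s) / n) • f (s + (t - s) * i / n)) - I| ω})
      atTop (nhds 0)) :
    ∫ ω, I ω ∂P = ∫ u in s..t, (∫ ω, f u ω ∂P) := by
  have hT : 0 ≤ t - s := sub_nonneg.2 hst
  have hsmem : s ∈ Icc s t := ⟨le_refl s, hst⟩
  -- pointwise domination of each f u by g
  have hfg : ∀ u ∈ Icc s t, ∀ᵐ ω ∂P, |f u ω| ≤ g ω := by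
    intro u hu
    have hle : |f u| ≤ g := hg.1 ⟨u, hu, rfl⟩
    have h1 := AEEqFun.coeFn_le.2 hle
    filter_upwards [h1, AEEqFun.coeFn_abs (f u)] with ω h1 h2
    rw [← h2]
    exact h1
  have hg0 : ∀ᵐ ω ∂P, 0 ≤ g ω := by
    filter_upwards [hfg s hsmem] with ω h
    exact (abs_nonneg _).trans h
  have hfint : ∀ u ∈ Icc s t, Integrable (⇑(f u)) P := fun u hu =>
    hgint.mono' (f u).aestronglyMeasurable (by simpa [Real.norm_eq_abs] using hfg u hu)
  -- mesh points are in [s,t]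
  have hmem : ∀ n : ℕ, ∀ i ∈ Finset.range n, s + (t - s) * i / n ∈ Icc s t := by
    intro n i hi
    rw [Finset.mem_range] at hi
    have hn0 : 0 < (n : ℝ) := by exact_mod_cast Nat.pos_of_ne_zero (by omega)
    constructor
    · have : 0 ≤ (t - s) * i / n := by positivity
      linarith
    · have h1 : (t - s) * (i : ℝ) ≤ (t - s) * (n : ℝ) :=
        mul_le_mul_of_nonneg_left (by exact_mod_cast hi.le) hT
      have h2 : (t - s) * i / n ≤ t - s := by
        rw [div_le_iff₀ hn0]
        nlinarith
      linarith
  -- coercion of the Riemann sums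
  have hScoe : ∀ n : ℕ, ⇑(∑ i ∈ Finset.range n, ((t - s) / n) • f (s + (t - s) * i / n))
      =ᵐ[P] fun ω => ∑ i ∈ Finset.range n, ((t - s) / n) * f (s + (t - s) * i / n) ω := by
    intro n
    have h1 := aux_coeFn_finsetSum (Finset.range n)
      (fun i => ((t - s) / n) • f (s + (t - s) * i / n))
    have h2 : ∀ᵐ ω ∂P, ∀ i : ℕ, i < n →
        (((t - s) / (n : ℝ)) • f (s + (t - s) * i / n)) ω
          = ((t - s) / n) * f (s + (t - s) * i / n) ω := by
      rw [ae_all_iff]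
      intro i
      by_cases hi : i < n
      · filter_upwards [AEEqFun.coeFn_smul ((t - s) / (n : ℝ)) (f (s + (t - s) * i / n))]
          with ω h _
        rw [h]
        simp
      · filter_upwards with ω h
        exact absurd h hi
    filter_upwards [h1, h2] with ω h1 h2
    rw [h1]
    exact Finset.sum_congr rfl fun i hi => h2 i (Finset.mem_range.1 hi)
  -- uniform domination of the Riemann sums
  have hSbound : ∀ n : ℕ,
      ∀ᵐ ω ∂P, |(⇑(∑ i ∈ Finset.range n, ((t - s) / n) • f (s + (t - s) * i / n)) : Ω → ℝ) ω|
        ≤ (t - s) * g ω := by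
    intro n
    have hb : ∀ᵐ ω ∂P, ∀ i : ℕ, i < n → |f (s + (t - s) * i / n) ω| ≤ g ω := by
      rw [ae_all_iff]
      intro i
      by_cases hi : i < n
      · filter_upwards [hfg _ (hmem n i (Finset.mem_range.2 hi))] with ω h _
        exact h
      · filter_upwards with ω h
        exact absurd h hi
    have hnc : (n : ℝ) * ((t - s) / n) ≤ t - s := by
      rcases Nat.eq_zero_or_pos n with h | h
      · simp [h, hT]
      · have hn0 : (0 : ℝ) < n := by exact_mod_cast h
        rw [mul_div_cancel₀ _ (ne_of_gt hn0)]
    have hc0 : 0 ≤ (t - s) / (n : ℝ) := by positivity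
    filter_upwards [hScoe n, hb, hg0] with ω h1 h2 h3
    rw [h1]
    calc |∑ i ∈ Finset.range n, ((t - s) / n) * f (s + (t - s) * i / n) ω|
        ≤ ∑ i ∈ Finset.range n, |((t - s) / n) * f (s + (t - s) * i / n) ω| :=
          Finset.abs_sum_le_sum_abs _ _
      _ ≤ ∑ _i ∈ Finset.range n, ((t - s) / n) * g ω := by
          refine Finset.sum_le_sum fun i hi => ?_
          rw [abs_mul, abs_of_nonneg hc0]
          exact mul_le_mul_of_nonneg_left (h2 i (Finset.mem_range.1 hi)) hc0
      _ = (n : ℝ) * (((t - s) / n) * g ω) := by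
          rw [Finset.sum_const, Finset.card_range, nsmul_eq_mul]
      _ ≤ (t - s) * g ω := by
          rw [← mul_assoc]
          exact mul_le_mul_of_nonneg_right hnc h3
  -- convergence in measure of the Riemann sums to I
  have hSm : TendstoInMeasure P
      (fun n => ⇑(∑ i ∈ Finset.range n, ((t - s) / n) • f (s + (t - s) * i / n))) atTop ⇑I := by
    rw [tendstoInMeasure_iff_dist]
    intro ε hε
    refine Filter.Tendsto.congr (fun n => ?_) (hI ε hε)
    apply measure_congr
    apply eventuallyEq_set.2
    filter_upwards [AEEqFun.coeFn_abs
        ((∑ i ∈ Finset.range n, ((t - s) / n) • f (s + (t - s) * i / n)) - I),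
      AEEqFun.coeFn_sub (∑ i ∈ Finset.range n, ((t - s) / n) • f (s + (t - s) * i / n)) I]
      with ω h1 h2
    simp only [Set.mem_setOf_eq, h1, h2, Pi.sub_apply, Real.dist_eq]
  obtain ⟨hIint, hItend⟩ := aux_key
    (fun n => (∑ i ∈ Finset.range n,
      ((t - s) / n) • f (s + (t - s) * i / n)).aestronglyMeasurable)
    I.aestronglyMeasurable (hgint.const_mul (t - s)) (Eventually.of_forall hSbound) hSm
  -- continuity of u ↦ ∫ f u dP on [s,t]
  have hFcont : ContinuousOn (fun u => ∫ ω, f u ω ∂P) (Icc s t) := by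
    intro u hu
    have key : Tendsto (fun v => ∫ ω, f v ω ∂P) (nhdsWithin u (Icc s t))
        (𝓝 (∫ ω, f u ω ∂P)) := by
      rw [tendsto_iff_seq_tendsto]
      intro v hv
      have hvmem : ∀ᶠ n in atTop, v n ∈ Icc s t := hv self_mem_nhdsWithin
      have hm : TendstoInMeasure P (fun n => ⇑(f (v n))) atTop ⇑(f u) := by
        rw [tendstoInMeasure_iff_dist]
        intro ε hε
        refine Filter.Tendsto.congr (fun n => ?_) ((hcont u hu ε hε).comp hv)
        apply measure_congr
        apply eventuallyEq_set.2
        filter_upwards [AEEqFun.coeFn_abs (f (v n) - f u), AEEqFun.coeFn_sub (f (v n)) (f u)]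
          with ω h1 h2
        simp only [Set.mem_setOf_eq, Function.comp_apply, h1, h2, Pi.sub_apply, Real.dist_eq]
      have hbV : ∀ᶠ n in atTop, ∀ᵐ ω ∂P, |f (v n) ω| ≤ g ω :=
        hvmem.mono fun n hn => hfg _ hn
      exact (aux_key (fun n => (f (v n)).aestronglyMeasurable) (f u).aestronglyMeasurable
        hgint hbV hm).2
    exact key
  -- integral of Riemann sum = Riemann sum of integrals
  have hSint : ∀ n : ℕ,
      ∫ ω, (∑ i ∈ Finset.range n, ((t - s) / n) • f (s + (t - s) * i / n)) ω ∂P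
        = ∑ i ∈ Finset.range n, ((t - s) / n) * ∫ ω, f (s + (t - s) * i / n) ω ∂P := by
    intro n
    rw [integral_congr_ae (hScoe n),
      integral_finset_sum _ (fun i hi => ((hfint _ (hmem n i hi)).const_mul _))]
    exact Finset.sum_congr rfl fun i _ => integral_const_mul _ _
  have hR := aux_riemann hst hFcont
  have hR' : Tendsto (fun n : ℕ =>
      ∫ ω, (∑ i ∈ Finset.range n, ((t - s) / n) • f (s + (t - s) * i / n)) ω ∂P)
      atTop (𝓝 (∫ u in s..t, ∫ ω, f u ω ∂P)) := by
    refine Filter.Tendsto.congr (fun n => ?_) hR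
    exact (hSint n).symm
  exact tendsto_nhds_unique hItend hR'

end
end
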